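/- arXiv:2605.09226 — 2 statements merged into one kernel-verified Lean document; each statement's English description precedes it below -/
import Mathlib

section
/- Let N, d ≥ 1, n_q ≥ 1, α ≥ 0, and 0 ≤ κ < 1. Let σ : ℝ → ℝ satisfy |σ(x) − σ(y)| ≤ |x − y| for all x, y, applied entrywise to matrices. Let Ã ∈ ℝ^{N×N}, W, Ω ∈ ℝ^{d×d}, H ∈ ℝ^{N×d}, b ∈ ℝ^{d} with ‖Ã‖₂ · ‖W‖₂ ≤ κ, and let 𝟏 ∈ ℝ^{N} be the all-ones vector. Let W_in ∈ ℝ^{n_q×d}, W_out ∈ ℝ^{d×n_q}, and let f_M : ℝ^{n_q} → ℝ^{n_q} be a map each of whose scalar components f_M^{(j)} satisfies |f_M^{(j)}(u) − f_M^{(j)}(u')| ≤ 2 ‖u − u'‖₂ for all u, u'. Define q(s) = W_out · f_M(tanh(W_in s)) and let Q : ℝ^{N×d} → ℝ^{N×d} apply q to each row. Define Φ(Z) = σ(Ã Z Wᵀ + H Ωᵀ + 𝟏 bᵀ) + α Q(Z). Then for all Z₁, Z₂ ∈ ℝ^{N×d}, ‖Φ(Z₁) − Φ(Z₂)‖_F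 ≤ (κ + 2 α √(n_q) ‖W_out‖₂ ‖W_in‖₂) ‖Z₁ − Z₂‖_F; in particular, if κ + 2 α √(n_q) ‖W_out‖₂ ‖W_in‖₂ < 1, then Φ has a unique fixed point to which Picard iteration converges from any initialization. -/
open Matrix Filter Topology

/-- Frobenius norm of a real matrix. -/
noncomputable def frobNorm {m n : ℕ} (A : Matrix (Fin m) (Fin n) ℝ) : ℝ :=
  Real.sqrt (∑ i, ∑ j, (A i j) ^ 2)

/-- Spectral norm (operator norm induced by the Euclidean vector norm). -/
noncomputable def specNorm {m n : ℕ} (A : Matrix (Fin m) (Fin n) ℝ) : ℝ :=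
  ‖LinearMap.toContinuousLinearMap (Matrix.toEuclideanLin A)‖

/-- Euclidean norm of a real vector. -/
noncomputable def eucNorm {n : ℕ} (v : Fin n → ℝ) : ℝ :=
  Real.sqrt (∑ i, (v i) ^ 2)

namespace SDIaux

lemma eucNorm_eq {n : ℕ} (v : Fin n → ℝ) :
    eucNorm v = ‖(WithLp.equiv 2 (Fin n → ℝ)).symm v‖ := by
  rw [EuclideanSpace.norm_eq]
  simp [eucNorm, Real.norm_eq_abs, sq_abs]

lemma eucNorm_nonneg {n : ℕ} (v : Fin n → ℝ) : 0 ≤ eucNorm v := Real.sqrt_nonneg _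

lemma frobNorm_nonneg {m n : ℕ} (A : Matrix (Fin m) (Fin n) ℝ) : 0 ≤ frobNorm A :=
  Real.sqrt_nonneg _

lemma specNorm_nonneg {m n : ℕ} (A : Matrix (Fin m) (Fin n) ℝ) : 0 ≤ specNorm A :=
  norm_nonneg _

lemma eucNorm_sq {n : ℕ} (v : Fin n → ℝ) : eucNorm v ^ 2 = ∑ i, (v i) ^ 2 :=
  Real.sq_sqrt (by positivity)

lemma mulVec_bound {m n : ℕ} (A : Matrix (Fin m) (Fin n) ℝ) (v : Fin n → ℝ) :
    eucNorm (A.mulVec v) ≤ specNorm A * eucNorm v := by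
  rw [eucNorm_eq, eucNorm_eq]
  have h := (LinearMap.toContinuousLinearMap (Matrix.toEuclideanLin A)).le_opNorm
    ((WithLp.equiv 2 (Fin n → ℝ)).symm v)
  simpa [specNorm] using h

/-- Row-wise bound implies Frobenius bound. -/
lemma frob_le_of_rows {m n p : ℕ} (X : Matrix (Fin m) (Fin n) ℝ)
    (M : Matrix (Fin m) (Fin p) ℝ) {c : ℝ} (hc : 0 ≤ c)
    (h : ∀ i, eucNorm (M i) ≤ c * eucNorm (X i)) :
    frobNorm M ≤ c * frobNorm X := by
  have key : ∑ i, ∑ j, (M i j) ^ 2 ≤ c ^ 2 * ∑ i, ∑ j, (X i j) ^ 2 := by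
    rw [Finset.mul_sum]
    refine Finset.sum_le_sum fun i _ => ?_
    have h1 : eucNorm (M i) ^ 2 ≤ (c * eucNorm (X i)) ^ 2 :=
      pow_le_pow_left₀ (eucNorm_nonneg _) (h i) 2
    rw [eucNorm_sq] at h1
    calc ∑ j, (M i j) ^ 2 ≤ (c * eucNorm (X i)) ^ 2 := h1
      _ = c ^ 2 * eucNorm (X i) ^ 2 := by ring
      _ = c ^ 2 * ∑ j, (X i j) ^ 2 := by rw [eucNorm_sq]
  calc frobNorm M ≤ Real.sqrt (c ^ 2 * ∑ i, ∑ j, (X i j) ^ 2) := Real.sqrt_le_sqrt key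
    _ = c * frobNorm X := by
        rw [Real.sqrt_mul (sq_nonneg c), Real.sqrt_sq hc]; rfl

lemma frob_transpose {m n : ℕ} (A : Matrix (Fin m) (Fin n) ℝ) :
    frobNorm Aᵀ = frobNorm A := by
  unfold frobNorm
  rw [Finset.sum_comm]
  rfl

lemma frob_mulT_le {m n p : ℕ} (Y : Matrix (Fin m) (Fin n) ℝ) (B : Matrix (Fin p) (Fin n) ℝ) :
    frobNorm (Y * Bᵀ) ≤ specNorm B * frobNorm Y := by
  apply frob_le_of_rows Y _ (specNorm_nonneg B)
  intro i
  have hrow : (Y * Bᵀ) i = B.mulVec (Y i) := by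
    funext j
    simp [Matrix.mul_apply, Matrix.mulVec, dotProduct, mul_comm]
  rw [hrow]
  exact mulVec_bound B (Y i)

lemma frob_mul_le {m n p : ℕ} (A : Matrix (Fin m) (Fin n) ℝ) (X : Matrix (Fin n) (Fin p) ℝ) :
    frobNorm (A * X) ≤ specNorm A * frobNorm X := by
  have h : A * X = (Xᵀ * Aᵀ)ᵀ := by
    rw [Matrix.transpose_mul, Matrix.transpose_transpose, Matrix.transpose_transpose]
  rw [h, frob_transpose]
  calc frobNorm (Xᵀ * Aᵀ) ≤ specNorm A * frobNorm Xᵀ := frob_mulT_le Xᵀ A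
    _ = specNorm A * frobNorm X := by rw [frob_transpose]

/-- tanh is 1-Lipschitz. -/
lemma tanh_lip (a b : ℝ) : |Real.tanh a - Real.tanh b| ≤ |a - b| := by
  have hderiv : ∀ x : ℝ, HasDerivAt Real.tanh (1 / Real.cosh x ^ 2) x := by
    intro x
    have h : HasDerivAt Real.tanh
        ((Real.cosh x * Real.cosh x - Real.sinh x * Real.sinh x) / Real.cosh x ^ 2) x := by
      have ht : Real.tanh = fun y => Real.sinh y / Real.cosh y :=
        funext Real.tanh_eq_sinh_div_cosh
      rw [ht]
      exact (Real.hasDerivAt_sinh x).div (Real.hasDerivAt_cosh x) (Real.cosh_pos x).ne'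
    have e : Real.cosh x * Real.cosh x - Real.sinh x * Real.sinh x = 1 := by
      nlinarith [Real.cosh_sq x]
    rwa [e] at h
  have hlip : LipschitzWith 1 Real.tanh := by
    apply lipschitzWith_of_nnnorm_deriv_le (fun x => (hderiv x).differentiableAt)
    intro x
    have hd : deriv Real.tanh x = 1 / Real.cosh x ^ 2 := (hderiv x).deriv
    rw [hd]
    have h1 : (1 : ℝ) ≤ Real.cosh x ^ 2 := by nlinarith [Real.one_le_cosh x]
    have hb : ‖(1 : ℝ) / Real.cosh x ^ 2‖ ≤ 1 := by
      rw [Real.norm_eq_abs, abs_of_nonneg (by positivity), div_le_one (by positivity)]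
      exact h1
    exact_mod_cast hb
  have h := hlip.dist_le_mul a b
  simpa [Real.dist_eq] using h

noncomputable def toE {m n : ℕ} (A : Matrix (Fin m) (Fin n) ℝ) :
    EuclideanSpace ℝ (Fin m × Fin n) :=
  (WithLp.equiv 2 (Fin m × Fin n → ℝ)).symm (fun p => A p.1 p.2)

noncomputable def ofE {m n : ℕ} (x : EuclideanSpace ℝ (Fin m × Fin n)) :
    Matrix (Fin m) (Fin n) ℝ :=
  fun i j => x (i, j)

lemma ofE_toE {m n : ℕ} (A : Matrix (Fin m) (Fin n) ℝ) : ofE (toE A) = A := rfl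
lemma toE_ofE {m n : ℕ} (x : EuclideanSpace ℝ (Fin m × Fin n)) : toE (ofE x) = x := rfl
lemma toE_sub {m n : ℕ} (A B : Matrix (Fin m) (Fin n) ℝ) : toE (A - B) = toE A - toE B := rfl

lemma frob_eq {m n : ℕ} (A : Matrix (Fin m) (Fin n) ℝ) : frobNorm A = ‖toE A‖ := by
  rw [EuclideanSpace.norm_eq]
  simp only [frobNorm, Fintype.sum_prod_type, Real.norm_eq_abs, sq_abs]
  rfl

lemma frob_triangle {m n : ℕ} (A B : Matrix (Fin m) (Fin n) ℝ) :
    frobNorm (A + B) ≤ frobNorm A + frobNorm B := by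
  have h : toE (A + B) = toE A + toE B := rfl
  rw [frob_eq, frob_eq, frob_eq, h]
  exact norm_add_le _ _

lemma frob_smul {m n : ℕ} (a : ℝ) (ha : 0 ≤ a) (A : Matrix (Fin m) (Fin n) ℝ) :
    frobNorm (a • A) = a * frobNorm A := by
  have h : toE (a • A) = a • toE A := rfl
  rw [frob_eq, frob_eq, h, norm_smul, Real.norm_eq_abs, abs_of_nonneg ha]

lemma continuous_ofE {m n : ℕ} : Continuous (ofE (m := m) (n := n)) := by
  apply continuous_pi; intro i; apply continuous_pi; intro j
  exact (continuous_apply ((i, j) : Fin m × Fin n)).comp (PiLp.continuous_ofLp 2 _)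

end SDIaux

open SDIaux in
theorem explicit_state_dependent_injection
    (N d nq : ℕ) (hN : 1 ≤ N) (hd : 1 ≤ d) (hnq : 1 ≤ nq)
    (α κ : ℝ) (hα : 0 ≤ α) (hκ0 : 0 ≤ κ) (hκ1 : κ < 1)
    (σ : ℝ → ℝ) (hσ : ∀ x y : ℝ, |σ x - σ y| ≤ |x - y|)
    (Atil : Matrix (Fin N) (Fin N) ℝ) (W Ω : Matrix (Fin d) (Fin d) ℝ)
    (H : Matrix (Fin N) (Fin d) ℝ) (b : Fin d → ℝ)
    (hAW : specNorm Atil * specNorm W ≤ κ)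
    (Win : Matrix (Fin nq) (Fin d) ℝ) (Wout : Matrix (Fin d) (Fin nq) ℝ)
    (fM : (Fin nq → ℝ) → (Fin nq → ℝ))
    (hfM : ∀ (j : Fin nq) (u u' : Fin nq → ℝ),
      |fM u j - fM u' j| ≤ 2 * eucNorm (u - u'))
    (q : (Fin d → ℝ) → (Fin d → ℝ))
    (hqdef : ∀ s, q s = Wout.mulVec (fM (fun j => Real.tanh (Win.mulVec s j))))
    (Q : Matrix (Fin N) (Fin d) ℝ → Matrix (Fin N) (Fin d) ℝ)
    (hQ : ∀ (Z : Matrix (Fin N) (Fin d) ℝ) (i : Fin N), Q Z i = q (Z i))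
    (Φ : Matrix (Fin N) (Fin d) ℝ → Matrix (Fin N) (Fin d) ℝ)
    (hΦ : ∀ Z, Φ Z =
      (Atil * Z * Wᵀ + H * Ωᵀ + Matrix.vecMulVec (fun _ => (1 : ℝ)) b).map σ
        + α • Q Z) :
    (∀ Z₁ Z₂ : Matrix (Fin N) (Fin d) ℝ,
        frobNorm (Φ Z₁ - Φ Z₂) ≤
          (κ + 2 * α * Real.sqrt nq * specNorm Wout * specNorm Win)
            * frobNorm (Z₁ - Z₂)) ∧
    (κ + 2 * α * Real.sqrt nq * specNorm Wout * specNorm Win < 1 →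
      ∃ Zstar : Matrix (Fin N) (Fin d) ℝ,
        Φ Zstar = Zstar ∧
        (∀ Z, Φ Z = Z → Z = Zstar) ∧
        (∀ Z₀ : Matrix (Fin N) (Fin d) ℝ,
          Tendsto (fun t => Φ^[t] Z₀) atTop (nhds Zstar))) := by
  set L : ℝ := κ + 2 * α * Real.sqrt nq * specNorm Wout * specNorm Win with hLdef
  have hWoutn := specNorm_nonneg Wout
  have hWinn := specNorm_nonneg Win
  have hsqn : (0:ℝ) ≤ Real.sqrt nq := Real.sqrt_nonneg _
  have hcq0 : (0:ℝ) ≤ 2 * Real.sqrt nq * specNorm Wout * specNorm Win := by positivity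
  have hL0 : 0 ≤ L := by
    have h2 : (0:ℝ) ≤ 2 * α * Real.sqrt nq * specNorm Wout * specNorm Win := by positivity
    linarith
  -- Lipschitz bound for q
  have hq : ∀ s₁ s₂ : Fin d → ℝ, eucNorm (q s₁ - q s₂) ≤
      (2 * Real.sqrt nq * specNorm Wout * specNorm Win) * eucNorm (s₁ - s₂) := by
    intro s₁ s₂
    set u₁ : Fin nq → ℝ := fun j => Real.tanh (Win.mulVec s₁ j) with hu₁
    set u₂ : Fin nq → ℝ := fun j => Real.tanh (Win.mulVec s₂ j) with hu₂
    have h1 : q s₁ - q s₂ = Wout.mulVec (fM u₁ - fM u₂) := by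
      rw [hqdef, hqdef, Matrix.mulVec_sub]
    have h2 : eucNorm (fM u₁ - fM u₂) ≤ 2 * Real.sqrt nq * eucNorm (u₁ - u₂) := by
      have hsum : ∑ j, ((fM u₁ - fM u₂) j) ^ 2
          ≤ ∑ _j : Fin nq, (2 * eucNorm (u₁ - u₂)) ^ 2 := by
        refine Finset.sum_le_sum fun j _ => ?_
        have hj := hfM j u₁ u₂
        calc ((fM u₁ - fM u₂) j) ^ 2 = |fM u₁ j - fM u₂ j| ^ 2 := by
              rw [Pi.sub_apply, sq_abs]
          _ ≤ (2 * eucNorm (u₁ - u₂)) ^ 2 := pow_le_pow_left₀ (abs_nonneg _) hj 2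
      calc eucNorm (fM u₁ - fM u₂)
          ≤ Real.sqrt (∑ _j : Fin nq, (2 * eucNorm (u₁ - u₂)) ^ 2) :=
            Real.sqrt_le_sqrt hsum
        _ = 2 * Real.sqrt nq * eucNorm (u₁ - u₂) := by
            rw [Finset.sum_const, Finset.card_univ, Fintype.card_fin, nsmul_eq_mul,
              Real.sqrt_mul (by positivity),
              Real.sqrt_sq (by have := eucNorm_nonneg (u₁ - u₂); linarith)]
            ring
    have h3 : eucNorm (u₁ - u₂) ≤ eucNorm (Win.mulVec (s₁ - s₂)) := by
      unfold eucNorm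
      apply Real.sqrt_le_sqrt
      refine Finset.sum_le_sum fun j _ => ?_
      have hw : Win.mulVec (s₁ - s₂) j = Win.mulVec s₁ j - Win.mulVec s₂ j := by
        rw [Matrix.mulVec_sub]; rfl
      have ht := tanh_lip (Win.mulVec s₁ j) (Win.mulVec s₂ j)
      calc ((u₁ - u₂) j) ^ 2 = |Real.tanh (Win.mulVec s₁ j) - Real.tanh (Win.mulVec s₂ j)| ^ 2 := by
            rw [Pi.sub_apply, hu₁, hu₂, sq_abs]
        _ ≤ |Win.mulVec s₁ j - Win.mulVec s₂ j| ^ 2 := pow_le_pow_left₀ (abs_nonneg _) ht 2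
        _ = (Win.mulVec (s₁ - s₂) j) ^ 2 := by rw [hw, sq_abs]
    have h4 : eucNorm (Win.mulVec (s₁ - s₂)) ≤ specNorm Win * eucNorm (s₁ - s₂) :=
      mulVec_bound _ _
    calc eucNorm (q s₁ - q s₂) = eucNorm (Wout.mulVec (fM u₁ - fM u₂)) := by rw [h1]
      _ ≤ specNorm Wout * eucNorm (fM u₁ - fM u₂) := mulVec_bound _ _
      _ ≤ specNorm Wout * (2 * Real.sqrt nq * eucNorm (u₁ - u₂)) :=
          mul_le_mul_of_nonneg_left h2 hWoutn
      _ ≤ specNorm Wout * (2 * Real.sqrt nq * (specNorm Win * eucNorm (s₁ - s₂))) := by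
          have := le_trans h3 h4
          have h5 : 2 * Real.sqrt nq * eucNorm (u₁ - u₂)
              ≤ 2 * Real.sqrt nq * (specNorm Win * eucNorm (s₁ - s₂)) :=
            mul_le_mul_of_nonneg_left this (by positivity)
          exact mul_le_mul_of_nonneg_left h5 hWoutn
      _ = (2 * Real.sqrt nq * specNorm Wout * specNorm Win) * eucNorm (s₁ - s₂) := by ring
  -- entrywise 1-Lipschitz map bound
  have hmap : ∀ (M₁ M₂ : Matrix (Fin N) (Fin d) ℝ),
      frobNorm (M₁.map σ - M₂.map σ) ≤ frobNorm (M₁ - M₂) := by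
    intro M₁ M₂
    unfold frobNorm
    apply Real.sqrt_le_sqrt
    refine Finset.sum_le_sum fun i _ => Finset.sum_le_sum fun j _ => ?_
    simp only [Matrix.sub_apply, Matrix.map_apply]
    calc (σ (M₁ i j) - σ (M₂ i j)) ^ 2 = |σ (M₁ i j) - σ (M₂ i j)| ^ 2 := (sq_abs _).symm
      _ ≤ |M₁ i j - M₂ i j| ^ 2 := pow_le_pow_left₀ (abs_nonneg _) (hσ _ _) 2
      _ = (M₁ i j - M₂ i j) ^ 2 := sq_abs _
  -- main Lipschitz estimate
  have hlip : ∀ Z₁ Z₂ : Matrix (Fin N) (Fin d) ℝ,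
      frobNorm (Φ Z₁ - Φ Z₂) ≤ L * frobNorm (Z₁ - Z₂) := by
    intro Z₁ Z₂
    set C := H * Ωᵀ + Matrix.vecMulVec (fun _ => (1 : ℝ)) b with hC
    have hdiff : Φ Z₁ - Φ Z₂ =
        ((Atil * Z₁ * Wᵀ + H * Ωᵀ + Matrix.vecMulVec (fun _ => (1 : ℝ)) b).map σ
          - (Atil * Z₂ * Wᵀ + H * Ωᵀ + Matrix.vecMulVec (fun _ => (1 : ℝ)) b).map σ)
        + α • (Q Z₁ - Q Z₂) := by
      rw [hΦ, hΦ, smul_sub]; abel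
    have hM : (Atil * Z₁ * Wᵀ + H * Ωᵀ + Matrix.vecMulVec (fun _ => (1 : ℝ)) b)
        - (Atil * Z₂ * Wᵀ + H * Ωᵀ + Matrix.vecMulVec (fun _ => (1 : ℝ)) b)
        = Atil * (Z₁ - Z₂) * Wᵀ := by
      rw [Matrix.mul_sub, Matrix.sub_mul]; abel
    have hback : frobNorm ((Atil * Z₁ * Wᵀ + H * Ωᵀ + Matrix.vecMulVec (fun _ => (1 : ℝ)) b).map σ
          - (Atil * Z₂ * Wᵀ + H * Ωᵀ + Matrix.vecMulVec (fun _ => (1 : ℝ)) b).map σ)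
        ≤ κ * frobNorm (Z₁ - Z₂) := by
      calc frobNorm _ ≤ frobNorm (Atil * (Z₁ - Z₂) * Wᵀ) := by rw [← hM]; exact hmap _ _
        _ ≤ specNorm W * frobNorm (Atil * (Z₁ - Z₂)) := frob_mulT_le _ _
        _ ≤ specNorm W * (specNorm Atil * frobNorm (Z₁ - Z₂)) :=
            mul_le_mul_of_nonneg_left (frob_mul_le _ _) (specNorm_nonneg W)
        _ = (specNorm Atil * specNorm W) * frobNorm (Z₁ - Z₂) := by ring
        _ ≤ κ * frobNorm (Z₁ - Z₂) :=
            mul_le_mul_of_nonneg_right hAW (frobNorm_nonneg _)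
    have hQrows : frobNorm (Q Z₁ - Q Z₂)
        ≤ (2 * Real.sqrt nq * specNorm Wout * specNorm Win) * frobNorm (Z₁ - Z₂) := by
      apply frob_le_of_rows (Z₁ - Z₂) _ hcq0
      intro i
      have hrow : (Q Z₁ - Q Z₂) i = q (Z₁ i) - q (Z₂ i) := by
        funext j
        simp [Matrix.sub_apply, hQ]
      have hrow2 : (Z₁ - Z₂) i = Z₁ i - Z₂ i := rfl
      rw [hrow, hrow2]
      exact hq (Z₁ i) (Z₂ i)
    calc frobNorm (Φ Z₁ - Φ Z₂)
        ≤ frobNorm ((Atil * Z₁ * Wᵀ + H * Ωᵀ + Matrix.vecMulVec (fun _ => (1 : ℝ)) b).map σ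
            - (Atil * Z₂ * Wᵀ + H * Ωᵀ + Matrix.vecMulVec (fun _ => (1 : ℝ)) b).map σ)
          + frobNorm (α • (Q Z₁ - Q Z₂)) := by
          rw [hdiff]; exact frob_triangle _ _
      _ ≤ κ * frobNorm (Z₁ - Z₂) + α * frobNorm (Q Z₁ - Q Z₂) := by
          rw [frob_smul α hα]
          exact add_le_add hback (mul_le_mul_of_nonneg_left le_rfl hα)
      _ ≤ κ * frobNorm (Z₁ - Z₂)
          + α * ((2 * Real.sqrt nq * specNorm Wout * specNorm Win) * frobNorm (Z₁ - Z₂)) := by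
          exact add_le_add le_rfl (mul_le_mul_of_nonneg_left hQrows hα)
      _ = L * frobNorm (Z₁ - Z₂) := by rw [hLdef]; ring
  refine ⟨hlip, ?_⟩
  intro hL1
  -- Banach fixed point on Euclidean space
  let Ψ : EuclideanSpace ℝ (Fin N × Fin d) → EuclideanSpace ℝ (Fin N × Fin d) :=
    fun x => toE (Φ (ofE x))
  have hK0 : 0 ≤ L := hL0
  set K : NNReal := ⟨L, hK0⟩ with hK
  have hKL : (K : ℝ) = L := rfl
  have hlipK : LipschitzWith K Ψ := by
    apply LipschitzWith.of_dist_le_mul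
    intro x y
    rw [dist_eq_norm, dist_eq_norm]
    have h1 : ‖Ψ x - Ψ y‖ = frobNorm (Φ (ofE x) - Φ (ofE y)) := by
      rw [frob_eq, toE_sub]
    have h2 : frobNorm (ofE x - ofE y) = ‖x - y‖ := by
      rw [frob_eq]
      rfl
    rw [h1, hKL, ← h2]
    exact hlip (ofE x) (ofE y)
  have hcontr : ContractingWith K Ψ := by
    refine ⟨?_, hlipK⟩
    rw [← NNReal.coe_lt_coe, hKL]
    exact hL1
  set xs := ContractingWith.fixedPoint Ψ hcontr with hxs
  have hfix : Ψ xs = xs := hcontr.fixedPoint_isFixedPt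
  refine ⟨ofE xs, ?_, ?_, ?_⟩
  · calc Φ (ofE xs) = ofE (Ψ xs) := rfl
      _ = ofE xs := by rw [hfix]
  · intro Z hZ
    have hfp : Function.IsFixedPt Ψ (toE Z) := by
      show toE (Φ (ofE (toE Z))) = toE Z
      rw [ofE_toE, hZ]
    have := hcontr.fixedPoint_unique hfp
    calc Z = ofE (toE Z) := rfl
      _ = ofE xs := by rw [this]
  · intro Z₀
    have hiter : ∀ t, Φ^[t] Z₀ = ofE (Ψ^[t] (toE Z₀)) := by
      intro t
      induction t with
      | zero => rfl
      | succ t ih =>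
        rw [Function.iterate_succ_apply', Function.iterate_succ_apply', ih]
        rfl
    have htend := hcontr.tendsto_iterate_fixedPoint (toE Z₀)
    have := ((continuous_ofE.tendsto xs).comp htend)
    exact this.congr fun t => (hiter t).symm
end

section
/- Let N, d ≥ 1, n_q ≥ 1, α ≥ 0, and 0 ≤ κ < 1. Let σ : ℝ → ℝ satisfy |σ(x) − σ(y)| ≤ |x − y| for all x, y, applied entrywise to matrices. Let Ã ∈ ℝ^{N×N}, W, Ω ∈ ℝ^{d×d}, H ∈ ℝ^{N×d}, b ∈ ℝ^{d} with ‖Ã‖₂ · ‖W‖₂ ≤ κ, and let 𝟏 ∈ ℝ^{N} be the all-ones vector; write h(Z) = σ(Ã Z Wᵀ + H Ωᵀ + 𝟏 bᵀ). Let W_in ∈ ℝ^{n_q×d}, W_out ∈ ℝ^{d×n_q}, and let f_M : ℝ^{n_q} → ℝ^{n_q} be a map each of whose scalar components f_M^{(j)} satisfies |f_M^{(j)}(u) − f_M^{(j)}(u')| ≤ 2 ‖u − u'‖₂ for all u, u'. Define q(s) = W_out · f_M(tanh(W_in s)), let Q : ℝ^{N×d} → ℝ^{N×d} apply q to each row,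 and define Φ(Z) = h(Z) + α Q(h(Z)). Then for all Z₁, Z₂ ∈ ℝ^{N×d}, ‖Φ(Z₁) − Φ(Z₂)‖_F ≤ κ (1 + 2 α √(n_q) ‖W_out‖₂ ‖W_in‖₂) ‖Z₁ − Z₂‖_F; in particular, if κ (1 + 2 α √(n_q) ‖W_out‖₂ ‖W_in‖₂) < 1, then Φ has a unique fixed point to which Picard iteration converges from any initialization. -/
open Matrix Filter Topology

namespace BDProof

lemma eucNorm_eq {n : ℕ} (v : Fin n → ℝ) :
    eucNorm v = ‖(WithLp.equiv 2 (Fin n → ℝ)).symm v‖ := by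
  rw [EuclideanSpace.norm_eq, eucNorm]
  congr 1
  refine Finset.sum_congr rfl fun i _ => ?_
  rw [Real.norm_eq_abs, sq_abs]
  rfl

lemma eucNorm_nonneg {n : ℕ} (v : Fin n → ℝ) : 0 ≤ eucNorm v := Real.sqrt_nonneg _

lemma sq_eucNorm {n : ℕ} (v : Fin n → ℝ) : eucNorm v ^ 2 = ∑ i, (v i) ^ 2 := by
  rw [eucNorm, Real.sq_sqrt (Finset.sum_nonneg fun i _ => sq_nonneg _)]

lemma specNorm_nonneg {m n : ℕ} (A : Matrix (Fin m) (Fin n) ℝ) : 0 ≤ specNorm A :=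
  norm_nonneg _

lemma eucNorm_mulVec_le {m n : ℕ} (A : Matrix (Fin m) (Fin n) ℝ) (v : Fin n → ℝ) :
    eucNorm (A.mulVec v) ≤ specNorm A * eucNorm v := by
  have h := (LinearMap.toContinuousLinearMap (Matrix.toEuclideanLin A)).le_opNorm
      ((WithLp.equiv 2 (Fin n → ℝ)).symm v)
  have he : (LinearMap.toContinuousLinearMap (Matrix.toEuclideanLin A))
      ((WithLp.equiv 2 (Fin n → ℝ)).symm v)
      = (WithLp.equiv 2 (Fin m → ℝ)).symm (A.mulVec v) := by
    simp [LinearMap.coe_toContinuousLinearMap', Matrix.toEuclideanLin_apply_piLp_toLp]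
  rw [he] at h
  rw [eucNorm_eq, eucNorm_eq]
  exact h

/-- Monotonicity: entrywise abs domination gives eucNorm domination. -/
lemma eucNorm_le_of_abs_le {n : ℕ} (v w : Fin n → ℝ) (hvw : ∀ i, |v i| ≤ |w i|) :
    eucNorm v ≤ eucNorm w := by
  apply Real.sqrt_le_sqrt
  exact Finset.sum_le_sum fun i _ => by
    rw [← sq_abs (v i), ← sq_abs (w i)]
    exact pow_le_pow_left₀ (abs_nonneg _) (hvw i) 2

/-- Row-wise bound: if each row of `C` has euclidean norm at most `L` times the
corresponding row of `D`, then `frobNorm C ≤ L * frobNorm D`. -/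
lemma frob_row_bound {m n n' : ℕ} (C : Matrix (Fin m) (Fin n) ℝ)
    (D : Matrix (Fin m) (Fin n') ℝ) (L : ℝ) (hL : 0 ≤ L)
    (hrow : ∀ i, eucNorm (C i) ≤ L * eucNorm (D i)) :
    frobNorm C ≤ L * frobNorm D := by
  have h1 : frobNorm C = Real.sqrt (∑ i, eucNorm (C i) ^ 2) := by
    rw [frobNorm]; congr 1; exact Finset.sum_congr rfl fun i _ => (sq_eucNorm (C i)).symm
  have h2 : frobNorm D = Real.sqrt (∑ i, eucNorm (D i) ^ 2) := by
    rw [frobNorm]; congr 1; exact Finset.sum_congr rfl fun i _ => (sq_eucNorm (D i)).symm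
  rw [h1, h2]
  have : ∑ i, eucNorm (C i) ^ 2 ≤ L ^ 2 * ∑ i, eucNorm (D i) ^ 2 := by
    rw [Finset.mul_sum]
    refine Finset.sum_le_sum fun i _ => ?_
    rw [← mul_pow]
    exact pow_le_pow_left₀ (eucNorm_nonneg _) (hrow i) 2
  calc Real.sqrt (∑ i, eucNorm (C i) ^ 2)
      ≤ Real.sqrt (L ^ 2 * ∑ i, eucNorm (D i) ^ 2) := Real.sqrt_le_sqrt this
    _ = L * Real.sqrt (∑ i, eucNorm (D i) ^ 2) := by
        rw [Real.sqrt_mul (sq_nonneg _), Real.sqrt_sq hL]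

lemma frobNorm_nonneg {m n : ℕ} (A : Matrix (Fin m) (Fin n) ℝ) : 0 ≤ frobNorm A :=
  Real.sqrt_nonneg _

lemma frobNorm_transpose {m n : ℕ} (A : Matrix (Fin m) (Fin n) ℝ) :
    frobNorm Aᵀ = frobNorm A := by
  rw [frobNorm, frobNorm, Finset.sum_comm]
  rfl

lemma frobNorm_le_of_abs_le {m n : ℕ} (A B : Matrix (Fin m) (Fin n) ℝ)
    (hAB : ∀ i j, |A i j| ≤ |B i j|) : frobNorm A ≤ frobNorm B := by
  have := frob_row_bound A B 1 zero_le_one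
    (fun i => by rw [one_mul]; exact eucNorm_le_of_abs_le _ _ (hAB i))
  linarith

/-- `‖B Wᵀ‖_F ≤ ‖W‖₂ ‖B‖_F`. -/
lemma frob_mul_transpose_le {m n k : ℕ} (B : Matrix (Fin m) (Fin n) ℝ)
    (W : Matrix (Fin k) (Fin n) ℝ) :
    frobNorm (B * Wᵀ) ≤ specNorm W * frobNorm B := by
  refine frob_row_bound _ _ _ (specNorm_nonneg W) fun i => ?_
  have : (B * Wᵀ) i = W.mulVec (B i) := by
    funext j
    simp [Matrix.mul_apply, Matrix.mulVec, Matrix.transpose_apply, dotProduct, mul_comm]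
  rw [this]
  exact eucNorm_mulVec_le W (B i)

/-- `‖A B‖_F ≤ ‖A‖₂ ‖B‖_F`. -/
lemma frob_mul_le {m n k : ℕ} (A : Matrix (Fin m) (Fin n) ℝ)
    (B : Matrix (Fin n) (Fin k) ℝ) :
    frobNorm (A * B) ≤ specNorm A * frobNorm B := by
  rw [← frobNorm_transpose (A * B), ← frobNorm_transpose B, Matrix.transpose_mul]
  exact frob_mul_transpose_le Bᵀ A

/-- tanh has derivative 1/cosh² . -/
lemma tanh_hasDerivAt (x : ℝ) : HasDerivAt Real.tanh (1 / Real.cosh x ^ 2) x := by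
  have h := (Real.hasDerivAt_sinh x).div (Real.hasDerivAt_cosh x) (Real.cosh_pos x).ne'
  have heq : (Real.sinh / Real.cosh) = Real.tanh := by
    funext y; rw [Real.tanh_eq_sinh_div_cosh]; rfl
  rw [heq] at h
  refine h.congr_deriv ?_
  have h1 : Real.cosh x * Real.cosh x - Real.sinh x * Real.sinh x = 1 := by
    have := Real.cosh_sq_sub_sinh_sq x; nlinarith
  rw [h1]

lemma tanh_lip (x y : ℝ) : |Real.tanh x - Real.tanh y| ≤ |x - y| := by
  have := Convex.norm_image_sub_le_of_norm_hasDerivWithin_le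
    (f := Real.tanh) (f' := fun z => 1 / Real.cosh z ^ 2) (C := 1) (s := Set.univ)
    (fun z _ => (tanh_hasDerivAt z).hasDerivWithinAt)
    (fun z _ => by
      rw [Real.norm_eq_abs, abs_of_nonneg (by positivity)]
      rw [div_le_one (by positivity)]
      nlinarith [Real.one_le_cosh z])
    convex_univ (Set.mem_univ y) (Set.mem_univ x)
  simpa [Real.norm_eq_abs] using this

end BDProof

open BDProof in
theorem explicit_backbone_dependent_injection
    (N d nq : ℕ) (hN : 1 ≤ N) (hd : 1 ≤ d) (hnq : 1 ≤ nq)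
    (α κ : ℝ) (hα : 0 ≤ α) (hκ0 : 0 ≤ κ) (hκ1 : κ < 1)
    (σ : ℝ → ℝ) (hσ : ∀ x y : ℝ, |σ x - σ y| ≤ |x - y|)
    (Atil : Matrix (Fin N) (Fin N) ℝ) (W Ω : Matrix (Fin d) (Fin d) ℝ)
    (H : Matrix (Fin N) (Fin d) ℝ) (b : Fin d → ℝ)
    (hAW : specNorm Atil * specNorm W ≤ κ)
    (h : Matrix (Fin N) (Fin d) ℝ → Matrix (Fin N) (Fin d) ℝ)
    (hh : ∀ Z, h Z =
      (Atil * Z * Wᵀ + H * Ωᵀ + Matrix.vecMulVec (fun _ => (1 : ℝ)) b).map σ)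
    (Win : Matrix (Fin nq) (Fin d) ℝ) (Wout : Matrix (Fin d) (Fin nq) ℝ)
    (fM : (Fin nq → ℝ) → (Fin nq → ℝ))
    (hfM : ∀ (j : Fin nq) (u u' : Fin nq → ℝ),
      |fM u j - fM u' j| ≤ 2 * eucNorm (u - u'))
    (q : (Fin d → ℝ) → (Fin d → ℝ))
    (hqdef : ∀ s, q s = Wout.mulVec (fM (fun j => Real.tanh (Win.mulVec s j))))
    (Q : Matrix (Fin N) (Fin d) ℝ → Matrix (Fin N) (Fin d) ℝ)
    (hQ : ∀ (S : Matrix (Fin N) (Fin d) ℝ) (i : Fin N), Q S i = q (S i))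
    (Φ : Matrix (Fin N) (Fin d) ℝ → Matrix (Fin N) (Fin d) ℝ)
    (hΦ : ∀ Z, Φ Z = h Z + α • Q (h Z)) :
    (∀ Z₁ Z₂ : Matrix (Fin N) (Fin d) ℝ,
        frobNorm (Φ Z₁ - Φ Z₂) ≤
          κ * (1 + 2 * α * Real.sqrt nq * specNorm Wout * specNorm Win)
            * frobNorm (Z₁ - Z₂)) ∧
    (κ * (1 + 2 * α * Real.sqrt nq * specNorm Wout * specNorm Win) < 1 →
      ∃ Zstar : Matrix (Fin N) (Fin d) ℝ,
        Φ Zstar = Zstar ∧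
        (∀ Z, Φ Z = Z → Z = Zstar) ∧
        (∀ Z₀ : Matrix (Fin N) (Fin d) ℝ,
          Tendsto (fun t => Φ^[t] Z₀) atTop (nhds Zstar))) := by
  -- Lipschitz constant of q
  set Lq : ℝ := 2 * Real.sqrt nq * specNorm Wout * specNorm Win with hLq
  have hLq0 : 0 ≤ Lq := by
    have := specNorm_nonneg Wout
    have := specNorm_nonneg Win
    have := Real.sqrt_nonneg (nq : ℝ)
    positivity
  -- q is Lq-Lipschitz w.r.t. eucNorm
  have hq_lip : ∀ s s' : Fin d → ℝ, eucNorm (q s - q s') ≤ Lq * eucNorm (s - s') := by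
    intro s s'
    set u : Fin nq → ℝ := fun j => Real.tanh (Win.mulVec s j)
    set u' : Fin nq → ℝ := fun j => Real.tanh (Win.mulVec s' j)
    have hqq : q s - q s' = Wout.mulVec (fM u - fM u') := by
      rw [hqdef, hqdef, ← Matrix.mulVec_sub]
    -- eucNorm (u - u') ≤ specNorm Win * eucNorm (s - s')
    have huu : eucNorm (u - u') ≤ specNorm Win * eucNorm (s - s') := by
      calc eucNorm (u - u') ≤ eucNorm (Win.mulVec (s - s')) := by
            refine eucNorm_le_of_abs_le _ _ fun j => ?_
            have h1 : Win.mulVec (s - s') j = Win.mulVec s j - Win.mulVec s' j := by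
              rw [Matrix.mulVec_sub]; rfl
            rw [h1]
            calc |(u - u') j| = |Real.tanh (Win.mulVec s j) - Real.tanh (Win.mulVec s' j)| := rfl
              _ ≤ |Win.mulVec s j - Win.mulVec s' j| := tanh_lip _ _
              _ = |Win.mulVec s j - Win.mulVec s' j| := rfl
        _ ≤ specNorm Win * eucNorm (s - s') := eucNorm_mulVec_le _ _
    -- eucNorm (fM u - fM u') ≤ 2 √nq eucNorm (u - u')
    have hfMd : eucNorm (fM u - fM u') ≤ 2 * Real.sqrt nq * eucNorm (u - u') := by
      have hsq : eucNorm (fM u - fM u') ^ 2 ≤ (2 * Real.sqrt nq * eucNorm (u - u')) ^ 2 := by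
        rw [sq_eucNorm]
        have hbd : ∀ j : Fin nq, ((fM u - fM u') j) ^ 2 ≤ (2 * eucNorm (u - u')) ^ 2 := by
          intro j
          rw [← sq_abs ((fM u - fM u') j)]
          exact pow_le_pow_left₀ (abs_nonneg _) (hfM j u u') 2
        calc ∑ j, ((fM u - fM u') j) ^ 2 ≤ ∑ _j : Fin nq, (2 * eucNorm (u - u')) ^ 2 :=
              Finset.sum_le_sum fun j _ => hbd j
          _ = (nq : ℝ) * (2 * eucNorm (u - u')) ^ 2 := by
              rw [Finset.sum_const, Finset.card_univ, Fintype.card_fin, nsmul_eq_mul]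
          _ = (2 * Real.sqrt nq * eucNorm (u - u')) ^ 2 := by
              have hs : Real.sqrt nq ^ 2 = (nq : ℝ) := Real.sq_sqrt (Nat.cast_nonneg nq)
              linear_combination (-4 * eucNorm (u - u') ^ 2) * hs
      have h2 : 0 ≤ 2 * Real.sqrt nq * eucNorm (u - u') :=
        mul_nonneg (mul_nonneg (by norm_num) (Real.sqrt_nonneg _)) (eucNorm_nonneg _)
      nlinarith [eucNorm_nonneg (fM u - fM u')]
    calc eucNorm (q s - q s') = eucNorm (Wout.mulVec (fM u - fM u')) := by rw [hqq]
      _ ≤ specNorm Wout * eucNorm (fM u - fM u') := eucNorm_mulVec_le _ _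
      _ ≤ specNorm Wout * (2 * Real.sqrt nq * eucNorm (u - u')) := by
          exact mul_le_mul_of_nonneg_left hfMd (specNorm_nonneg _)
      _ ≤ specNorm Wout * (2 * Real.sqrt nq * (specNorm Win * eucNorm (s - s'))) := by
          have h2 : (0:ℝ) ≤ 2 * Real.sqrt nq := by positivity
          exact mul_le_mul_of_nonneg_left
            (mul_le_mul_of_nonneg_left huu h2) (specNorm_nonneg _)
      _ = Lq * eucNorm (s - s') := by rw [hLq]; ring
  -- Q is Lq-Lipschitz in Frobenius norm
  have hQ_lip : ∀ S₁ S₂ : Matrix (Fin N) (Fin d) ℝ,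
      frobNorm (Q S₁ - Q S₂) ≤ Lq * frobNorm (S₁ - S₂) := by
    intro S₁ S₂
    refine frob_row_bound _ _ _ hLq0 fun i => ?_
    have h1 : (Q S₁ - Q S₂) i = q (S₁ i) - q (S₂ i) := by
      funext j; simp [Pi.sub_apply, hQ]
    have h2 : (S₁ - S₂) i = S₁ i - S₂ i := rfl
    rw [h1, h2]
    exact hq_lip _ _
  -- h is κ-Lipschitz in Frobenius norm
  have hh_lip : ∀ Z₁ Z₂ : Matrix (Fin N) (Fin d) ℝ,
      frobNorm (h Z₁ - h Z₂) ≤ κ * frobNorm (Z₁ - Z₂) := by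
    intro Z₁ Z₂
    have step1 : frobNorm (h Z₁ - h Z₂) ≤ frobNorm (Atil * (Z₁ - Z₂) * Wᵀ) := by
      refine frobNorm_le_of_abs_le _ _ fun i j => ?_
      rw [hh, hh]
      set M₁ : Matrix (Fin N) (Fin d) ℝ :=
        Atil * Z₁ * Wᵀ + H * Ωᵀ + Matrix.vecMulVec (fun _ => (1:ℝ)) b with hM₁
      set M₂ : Matrix (Fin N) (Fin d) ℝ :=
        Atil * Z₂ * Wᵀ + H * Ωᵀ + Matrix.vecMulVec (fun _ => (1:ℝ)) b with hM₂
      have hE : (Atil * (Z₁ - Z₂) * Wᵀ) i j = M₁ i j - M₂ i j := by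
        have hD : Atil * (Z₁ - Z₂) * Wᵀ = Atil * Z₁ * Wᵀ - Atil * Z₂ * Wᵀ := by
          rw [Matrix.mul_sub, Matrix.sub_mul]
        rw [hD, hM₁, hM₂]
        simp [Matrix.sub_apply, Matrix.add_apply]
      have hs := hσ (M₁ i j) (M₂ i j)
      rw [← hE] at hs
      simpa [Matrix.sub_apply, Matrix.map_apply] using hs
    calc frobNorm (h Z₁ - h Z₂) ≤ frobNorm (Atil * (Z₁ - Z₂) * Wᵀ) := step1
      _ ≤ specNorm Atil * frobNorm ((Z₁ - Z₂) * Wᵀ) := by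
          rw [Matrix.mul_assoc]; exact frob_mul_le _ _
      _ ≤ specNorm Atil * (specNorm W * frobNorm (Z₁ - Z₂)) :=
          mul_le_mul_of_nonneg_left (frob_mul_transpose_le _ _) (specNorm_nonneg _)
      _ = specNorm Atil * specNorm W * frobNorm (Z₁ - Z₂) := by ring
      _ ≤ κ * frobNorm (Z₁ - Z₂) :=
          mul_le_mul_of_nonneg_right hAW (frobNorm_nonneg _)
  -- Triangle inequality & smul for frobNorm via the euclidean identification
  have frob_add_le : ∀ A B : Matrix (Fin N) (Fin d) ℝ,
      frobNorm (A + B) ≤ frobNorm A + frobNorm B := by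
    intro A B
    have key : ∀ C : Matrix (Fin N) (Fin d) ℝ,
        frobNorm C = ‖(WithLp.equiv 2 (Fin N × Fin d → ℝ)).symm (fun p => C p.1 p.2)‖ := by
      intro C
      rw [EuclideanSpace.norm_eq, frobNorm]
      congr 1
      rw [← Finset.sum_product']
      refine Finset.sum_congr rfl fun p _ => ?_
      rw [Real.norm_eq_abs, sq_abs]
      rfl
    rw [key, key, key]
    have : (WithLp.equiv 2 (Fin N × Fin d → ℝ)).symm (fun p => (A + B) p.1 p.2)
        = (WithLp.equiv 2 (Fin N × Fin d → ℝ)).symm (fun p => A p.1 p.2)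
          + (WithLp.equiv 2 (Fin N × Fin d → ℝ)).symm (fun p => B p.1 p.2) := rfl
    rw [this]
    exact norm_add_le _ _
  have frob_smul : ∀ (c : ℝ) (A : Matrix (Fin N) (Fin d) ℝ),
      frobNorm (c • A) = |c| * frobNorm A := by
    intro c A
    rw [frobNorm, frobNorm]
    have : ∑ i, ∑ j, ((c • A) i j) ^ 2 = c ^ 2 * ∑ i, ∑ j, (A i j) ^ 2 := by
      simp [Finset.mul_sum, Matrix.smul_apply, smul_eq_mul, mul_pow]
    rw [this, Real.sqrt_mul (sq_nonneg _), Real.sqrt_sq_eq_abs]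
  -- main Lipschitz estimate
  set K : ℝ := κ * (1 + 2 * α * Real.sqrt nq * specNorm Wout * specNorm Win) with hK
  have hKeq : K = κ * (1 + α * Lq) := by rw [hK, hLq]; ring
  have hK0 : 0 ≤ K := by
    rw [hKeq]
    have h1 : 0 ≤ 1 + α * Lq := by positivity
    positivity
  have main : ∀ Z₁ Z₂ : Matrix (Fin N) (Fin d) ℝ,
      frobNorm (Φ Z₁ - Φ Z₂) ≤ K * frobNorm (Z₁ - Z₂) := by
    intro Z₁ Z₂
    have hsplit : Φ Z₁ - Φ Z₂ = (h Z₁ - h Z₂) + α • (Q (h Z₁) - Q (h Z₂)) := by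
      rw [hΦ, hΦ, smul_sub]
      abel
    calc frobNorm (Φ Z₁ - Φ Z₂)
        = frobNorm ((h Z₁ - h Z₂) + α • (Q (h Z₁) - Q (h Z₂))) := by rw [hsplit]
      _ ≤ frobNorm (h Z₁ - h Z₂) + frobNorm (α • (Q (h Z₁) - Q (h Z₂))) := frob_add_le _ _
      _ = frobNorm (h Z₁ - h Z₂) + α * frobNorm (Q (h Z₁) - Q (h Z₂)) := by
          rw [frob_smul, abs_of_nonneg hα]
      _ ≤ frobNorm (h Z₁ - h Z₂) + α * (Lq * frobNorm (h Z₁ - h Z₂)) := by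
          have := hQ_lip (h Z₁) (h Z₂)
          nlinarith
      _ = (1 + α * Lq) * frobNorm (h Z₁ - h Z₂) := by ring
      _ ≤ (1 + α * Lq) * (κ * frobNorm (Z₁ - Z₂)) := by
          have h1 : 0 ≤ 1 + α * Lq := by positivity
          exact mul_le_mul_of_nonneg_left (hh_lip Z₁ Z₂) h1
      _ = K * frobNorm (Z₁ - Z₂) := by rw [hKeq]; ring
  refine ⟨main, fun hKlt => ?_⟩
  -- Banach fixed point via identification with EuclideanSpace
  set E := EuclideanSpace ℝ (Fin N × Fin d) with hE
  let toE : Matrix (Fin N) (Fin d) ℝ → E :=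
    fun A => (WithLp.equiv 2 (Fin N × Fin d → ℝ)).symm (fun p => A p.1 p.2)
  let ofE : E → Matrix (Fin N) (Fin d) ℝ :=
    fun x => fun i j => (WithLp.equiv 2 (Fin N × Fin d → ℝ)) x (i, j)
  have h_ofto : ∀ A, ofE (toE A) = A := fun A => rfl
  have h_toof : ∀ x, toE (ofE x) = x := fun x => rfl
  have hfrob : ∀ A : Matrix (Fin N) (Fin d) ℝ, frobNorm A = ‖toE A‖ := by
    intro A
    rw [EuclideanSpace.norm_eq, frobNorm]
    congr 1
    rw [← Finset.sum_product']
    refine Finset.sum_congr rfl fun p _ => ?_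
    rw [Real.norm_eq_abs, sq_abs]
    rfl
  have htoE_sub : ∀ A B, toE (A - B) = toE A - toE B := fun A B => rfl
  let Ψ : E → E := fun x => toE (Φ (ofE x))
  have hΨdist : ∀ x y : E, dist (Ψ x) (Ψ y) ≤ K * dist x y := by
    intro x y
    rw [dist_eq_norm, dist_eq_norm]
    have h1 : Ψ x - Ψ y = toE (Φ (ofE x) - Φ (ofE y)) := (htoE_sub _ _).symm
    have h2 : x - y = toE (ofE x - ofE y) := by
      rw [htoE_sub, h_toof, h_toof]
    rw [h1, h2, ← hfrob, ← hfrob]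
    exact main _ _
  have hcontract : ContractingWith K.toNNReal Ψ := by
    constructor
    · rw [← NNReal.coe_lt_coe, Real.coe_toNNReal K hK0]
      exact_mod_cast hKlt
    · refine LipschitzWith.of_dist_le_mul fun x y => ?_
      rw [Real.coe_toNNReal K hK0]
      exact hΨdist x y
  have : Nonempty E := ⟨0⟩
  set xstar := hcontract.fixedPoint Ψ with hxstar
  have hfix : Ψ xstar = xstar := hcontract.fixedPoint_isFixedPt
  refine ⟨ofE xstar, ?_, ?_, ?_⟩
  · -- Φ (ofE xstar) = ofE xstar
    have : toE (Φ (ofE xstar)) = Ψ xstar := rfl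
    calc Φ (ofE xstar) = ofE (toE (Φ (ofE xstar))) := (h_ofto _).symm
      _ = ofE (Ψ xstar) := by rw [this]
      _ = ofE xstar := by rw [hfix]
  · -- uniqueness
    intro Z hZ
    have hZfix : Function.IsFixedPt Ψ (toE Z) := by
      show toE (Φ (ofE (toE Z))) = toE Z
      rw [h_ofto, hZ]
    have := hcontract.fixedPoint_unique hZfix
    calc Z = ofE (toE Z) := (h_ofto Z).symm
      _ = ofE xstar := by rw [this]
  · -- convergence of Picard iteration
    intro Z₀
    have hiter : ∀ t : ℕ, Ψ^[t] (toE Z₀) = toE (Φ^[t] Z₀) := by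
      intro t
      induction t with
      | zero => rfl
      | succ k ih =>
        rw [Function.iterate_succ_apply', Function.iterate_succ_apply', ih]
        show toE (Φ (ofE (toE (Φ^[k] Z₀)))) = _
        rw [h_ofto]
    have htend : Tendsto (fun t => Ψ^[t] (toE Z₀)) atTop (nhds xstar) :=
      hcontract.tendsto_iterate_fixedPoint (toE Z₀)
    have hofE_cont : Continuous ofE := by
      refine continuous_pi fun i => continuous_pi fun j => ?_
      have : Continuous (fun x : E => (WithLp.equiv 2 (Fin N × Fin d → ℝ)) x) :=
        (PiLp.continuous_ofLp (p := 2) (β := fun _ : Fin N × Fin d => ℝ))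
      exact (continuous_apply (i, j)).comp this
    have := (hofE_cont.tendsto xstar).comp htend
    have heq : (fun t => ofE (Ψ^[t] (toE Z₀))) = fun t => Φ^[t] Z₀ := by
      funext t
      rw [hiter, h_ofto]
    rw [show (ofE ∘ fun t => Ψ^[t] (toE Z₀)) = fun t => ofE (Ψ^[t] (toE Z₀)) from rfl, heq] at this
    exact this
end
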